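/- A set 𝕡 of subsets of Σ* is a parameterization if and only if there exists a total function κ : Σ* → ℕ such that 𝕡 = K(κ). -/

import Mathlib

def Kpar {α : Type*} (κ : α → ℕ) : Set (Set α) :=
  {L | ∃ c : ℕ, ∀ x ∈ L, κ x ≤ c}

def IsParameterization {α : Type*} (𝕡 : Set (Set α)) : Prop :=
  (∀ P ∈ 𝕡, ∀ Q, Q ⊆ P → Q ∈ 𝕡) ∧
  (∀ A ∈ 𝕡, ∀ B ∈ 𝕡, A ∪ B ∈ 𝕡) ∧
  (∀ x : α, {x} ∈ 𝕡) ∧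
  (∃ Pseq : ℕ → Set α, (∀ i, Pseq i ∈ 𝕡) ∧ ∀ P ∈ 𝕡, ∃ i, P ⊆ Pseq i)

theorem isParameterization_iff_exists_param {α : Type*} [Countable α]
    (𝕡 : Set (Set α)) :
    IsParameterization 𝕡 ↔ ∃ κ : α → ℕ, 𝕡 = Kpar κ := by
  classical
  constructor
  · rintro ⟨hsub, hunion, hsing, Pseq, hPmem, hPcov⟩
    have hx : ∀ x : α, ∃ i, x ∈ Pseq i := by
      intro x
      obtain ⟨i, hi⟩ := hPcov {x} (hsing x)
      exact ⟨i, hi rfl⟩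
    refine ⟨fun x => Nat.find (hx x), ?_⟩
    -- accumulate sets
    have hacc : ∀ c : ℕ, Set.accumulate Pseq c ∈ 𝕡 := by
      intro c
      induction c with
      | zero => simpa [Set.accumulate] using hPmem 0
      | succ n ih =>
        rw [Set.accumulate_def, Set.biUnion_le_succ, ← Set.accumulate_def]
        exact hunion _ ih _ (hPmem (n + 1))
    ext L
    constructor
    · intro hL
      obtain ⟨i, hi⟩ := hPcov L hL
      exact ⟨i, fun x hxL => Nat.find_le (hi hxL)⟩
    · rintro ⟨c, hc⟩
      refine hsub _ (hacc c) L ?_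
      intro x hxL
      exact Set.mem_accumulate.mpr ⟨Nat.find (hx x), hc x hxL, Nat.find_spec (hx x)⟩
  · rintro ⟨κ, rfl⟩
    refine ⟨?_, ?_, ?_, fun i => {x | κ x ≤ i}, ?_, ?_⟩
    · rintro P ⟨c, hc⟩ Q hQ
      exact ⟨c, fun x hx => hc x (hQ hx)⟩
    · rintro A ⟨c, hc⟩ B ⟨d, hd⟩
      refine ⟨max c d, fun x hx => ?_⟩
      rcases hx with h | h
      · exact (hc x h).trans (le_max_left _ _)
      · exact (hd x h).trans (le_max_right _ _)
    · intro x
      exact ⟨κ x, fun y hy => by simp_all⟩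
    · intro i
      exact ⟨i, fun x hx => hx⟩
    · rintro P ⟨c, hc⟩
      exact ⟨c, fun x hx => hc x hx⟩
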